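/- (Schur–Horn, easy direction) If X is a real symmetric n×n matrix with eigenvalues λ_1,...,λ_n and diagonal entries d_1,...,d_n, then the vector (d_1,...,d_n) is majorized by (λ_1,...,λ_n). -/

import Mathlib

/-- Sum of the `k` smallest entries of `x`: the minimum of `∑ i ∈ s, x i`
over subsets `s` of cardinality `k`. -/
noncomputable def smallSum {n : ℕ} (x : Fin n → ℝ) (k : ℕ) : ℝ :=
  sInf ((fun s : Finset (Fin n) => ∑ i ∈ s, x i) '' {s | s.card = k})

/-- Sum of the `k` largest entries of `x`. -/
noncomputable def largeSum {n : ℕ} (x : Fin n → ℝ) (k : ℕ) : ℝ :=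
  sSup ((fun s : Finset (Fin n) => ∑ i ∈ s, x i) '' {s | s.card = k})

/-- `x` is majorized by `y` (`x ≼ y`). -/
def Majorized {n : ℕ} (x y : Fin n → ℝ) : Prop :=
  (∀ k, k ≤ n → largeSum x k ≤ largeSum y k) ∧ ∑ i, x i = ∑ i, y i

/-- `x ≼^w y`: weak majorization from above. -/
def WeakMajAbove {n : ℕ} (x y : Fin n → ℝ) : Prop :=
  ∀ k, 1 ≤ k → k ≤ n → smallSum y k ≤ smallSum x k

/-- `x ≺^w y`: strict weak majorization from above. -/
def StrictWeakMajAbove {n : ℕ} (x y : Fin n → ℝ) : Prop :=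
  ∀ k, 1 ≤ k → k ≤ n → smallSum y k < smallSum x k

open Finset

section aux
variable {n : ℕ}

lemma largeSum_finite (x : Fin n → ℝ) (k : ℕ) :
    ((fun s : Finset (Fin n) => ∑ i ∈ s, x i) '' {s | s.card = k}).Finite :=
  (Set.toFinite _).image _

lemma largeSum_nonempty (x : Fin n → ℝ) {k : ℕ} (hk : k ≤ n) :
    ((fun s : Finset (Fin n) => ∑ i ∈ s, x i) '' {s | s.card = k}).Nonempty := by
  obtain ⟨t, -, ht⟩ := Finset.exists_subset_card_eq (s := (univ : Finset (Fin n))) (n := k)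
    (by simpa using hk)
  exact ⟨_, ⟨t, ht, rfl⟩⟩

lemma sum_le_largeSum (x : Fin n → ℝ) {s : Finset (Fin n)} {k : ℕ} (hs : s.card = k) :
    ∑ i ∈ s, x i ≤ largeSum x k :=
  le_csSup (largeSum_finite x k).bddAbove ⟨s, hs, rfl⟩

lemma largeSum_mem (x : Fin n → ℝ) {k : ℕ} (hk : k ≤ n) :
    ∃ s : Finset (Fin n), s.card = k ∧ largeSum x k = ∑ i ∈ s, x i := by
  obtain ⟨s, hs, h⟩ := (largeSum_nonempty x hk).csSup_mem (largeSum_finite x k)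
  exact ⟨s, hs, h.symm⟩
end aux

section core
variable {n : ℕ}

lemma card_filter_val_lt {k : ℕ} (hk : k ≤ n) :
    (univ.filter (fun j : Fin n => (j : ℕ) < k)).card = k := by
  have : (univ.filter (fun j : Fin n => (j : ℕ) < k)) =
      (Finset.range k).attachFin (fun m hm => lt_of_lt_of_le (Finset.mem_range.mp hm) hk) := by
    ext j
    simp [Finset.mem_attachFin]
  rw [this, Finset.card_attachFin, Finset.card_range]

/-- Sorted core: if `μ` is antitone, `u ∈ [0,1]`, `∑ u = k`, then `∑ u μ ≤ ∑_{j<k} μ`. -/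
lemma sorted_core (μ u : Fin n → ℝ) (hmono : ∀ i j : Fin n, i ≤ j → μ j ≤ μ i)
    {k : ℕ} (hk : k ≤ n) (h0 : ∀ j, 0 ≤ u j) (h1 : ∀ j, u j ≤ 1)
    (hsum : ∑ j, u j = k) :
    ∑ j, u j * μ j ≤ ∑ j ∈ univ.filter (fun j : Fin n => (j : ℕ) < k), μ j := by
  rcases eq_or_lt_of_le hk with he | hkn
  · -- k = n : all u j = 1
    have hall : ∀ j, u j = 1 := by
      intro j
      by_contra h
      have hlt : u j < 1 := lt_of_le_of_ne (h1 j) h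
      have : ∑ j, u j < ∑ j : Fin n, (1 : ℝ) :=
        Finset.sum_lt_sum (fun i _ => h1 i) ⟨j, Finset.mem_univ j, hlt⟩
      simp only [Finset.sum_const, card_univ, Fintype.card_fin, nsmul_eq_mul, mul_one,
        hsum, he] at this
      exact lt_irrefl _ this
    have hfilter : (univ.filter (fun j : Fin n => (j : ℕ) < k)) = univ := by
      ext j; simpa [he] using j.isLt
    rw [hfilter]
    apply le_of_eq
    exact Finset.sum_congr rfl fun j _ => by rw [hall j, one_mul]
  · -- k < n, threshold c = μ ⟨k, hkn⟩
    set c := μ ⟨k, hkn⟩ with hc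
    have key : ∑ j, (u j - if (j : ℕ) < k then 1 else 0) * μ j ≤
        ∑ j, (u j - if (j : ℕ) < k then 1 else 0) * c := by
      apply Finset.sum_le_sum
      intro j _
      by_cases hj : (j : ℕ) < k
      · simp only [hj, if_pos]
        have hμ : c ≤ μ j := hmono j ⟨k, hkn⟩ (by simp [Fin.le_def]; omega)
        nlinarith [h1 j]
      · simp only [hj, if_neg, not_false_iff, sub_zero]
        have hμ : μ j ≤ c := hmono ⟨k, hkn⟩ j (by simp [Fin.le_def]; omega)
        nlinarith [h0 j]
    have hite : ∑ j : Fin n, (if (j : ℕ) < k then (1:ℝ) else 0) = k := by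
      rw [Finset.sum_boole]
      simp [card_filter_val_lt hk]
    have hrhs : ∑ j, (u j - if (j : ℕ) < k then 1 else 0) * c = 0 := by
      rw [← Finset.sum_mul, Finset.sum_sub_distrib, hsum, hite, sub_self, zero_mul]
    have hsplit : ∑ j, (u j - if (j : ℕ) < k then 1 else 0) * μ j =
        ∑ j, u j * μ j - ∑ j ∈ univ.filter (fun j : Fin n => (j : ℕ) < k), μ j := by
      rw [Finset.sum_filter, ← Finset.sum_sub_distrib]
      apply Finset.sum_congr rfl
      intro j _
      by_cases hj : (j : ℕ) < k <;> simp [hj] <;> ring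
    linarith
end core

section lemmas
variable {n : ℕ}

lemma largeSum_perm (x : Fin n → ℝ) (σ : Equiv.Perm (Fin n)) (k : ℕ) :
    largeSum (x ∘ σ) k = largeSum x k := by
  unfold largeSum
  congr 1
  ext r
  constructor
  · rintro ⟨s, hs, rfl⟩
    refine ⟨s.image σ, ?_, ?_⟩
    · simpa [Finset.card_image_of_injective _ σ.injective] using hs
    · simp [Finset.sum_image (fun a _ b _ h => σ.injective h)]
  · rintro ⟨s, hs, rfl⟩
    refine ⟨s.image σ.symm, ?_, ?_⟩
    · simpa [Finset.card_image_of_injective _ σ.symm.injective] using hs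
    · simp [Finset.sum_image (fun a _ b _ h => σ.symm.injective h), Function.comp]

lemma sum_mul_le_largeSum (lam t : Fin n → ℝ) {k : ℕ} (hk : k ≤ n)
    (h0 : ∀ j, 0 ≤ t j) (h1 : ∀ j, t j ≤ 1) (hsum : ∑ j, t j = k) :
    ∑ j, t j * lam j ≤ largeSum lam k := by
  classical
  set σ := Tuple.sort (fun i => -lam i) with hσ
  have hmono : Monotone ((fun i => -lam i) ∘ σ) := Tuple.monotone_sort _
  have hanti : ∀ i j : Fin n, i ≤ j → lam (σ j) ≤ lam (σ i) := by
    intro i j hij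
    have := hmono hij
    simp only [Function.comp_apply, neg_le_neg_iff] at this
    linarith
  have hre : ∑ j, t j * lam j = ∑ j, (t ∘ σ) j * (lam ∘ σ) j := by
    exact (Equiv.sum_comp σ (fun j => t j * lam j)).symm
  rw [hre]
  have hsum' : ∑ j, (t ∘ σ) j = k := by
    simpa [Function.comp] using (Equiv.sum_comp σ t).trans hsum
  have := sorted_core (lam ∘ σ) (t ∘ σ) hanti hk (fun j => h0 _) (fun j => h1 _) hsum'
  refine this.trans ?_
  set S := univ.filter (fun j : Fin n => (j : ℕ) < k)
  have hcard : (S.image σ).card = k := by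
    rw [Finset.card_image_of_injective _ σ.injective]
    exact card_filter_val_lt hk
  calc ∑ j ∈ S, (lam ∘ σ) j = ∑ i ∈ S.image σ, lam i := by
        rw [Finset.sum_image (fun a _ b _ h => σ.injective h)]; rfl
    _ ≤ largeSum lam k := sum_le_largeSum lam hcard

lemma exists_perm_of_ofFn_perm {α : Type*} [LinearOrder α] {f g : Fin n → α}
    (h : (List.ofFn f).Perm (List.ofFn g)) : ∃ σ : Equiv.Perm (Fin n), f = g ∘ σ := by
  set σf := Tuple.sort f
  set σg := Tuple.sort g
  have h1 : (List.ofFn (f ∘ σf)).Perm (List.ofFn (g ∘ σg)) :=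
    ((σf.ofFn_comp_perm f).trans h).trans (σg.ofFn_comp_perm g).symm
  have h2 : List.ofFn (f ∘ σf) = List.ofFn (g ∘ σg) :=
    List.Perm.eq_of_sortedLE (Tuple.monotone_sort f).sortedLE_ofFn
      (Tuple.monotone_sort g).sortedLE_ofFn h1
  have h3 : f ∘ σf = g ∘ σg := List.ofFn_injective h2
  refine ⟨σf.symm.trans σg, ?_⟩
  funext x
  have := congrFun h3 (σf.symm x)
  simpa using this
end lemmas

section matrixpart
open Matrix Polynomial
variable {n : ℕ}

lemma charpoly_conj_eq (U D V : Matrix (Fin n) (Fin n) ℝ) (hUV : U * V = 1) (hVU : V * U = 1) :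
    (U * D * V).charpoly = D.charpoly := by
  set f := (RingHom.mapMatrix (C : ℝ →+* ℝ[X]) : Matrix (Fin n) (Fin n) ℝ →+* Matrix (Fin n) (Fin n) ℝ[X]) with hf
  have hUV' : f U * f V = 1 := by rw [← _root_.map_mul, hUV, _root_.map_one]
  have hcomm : f U * Matrix.scalar (Fin n) (X : ℝ[X]) * f V = Matrix.scalar (Fin n) (X : ℝ[X]) := by
    rw [← (Matrix.scalar_commute (X : ℝ[X]) (fun r' => Commute.all _ _) (f U)).eq,
      mul_assoc, hUV', mul_one]
  have hmap : charmatrix (U * D * V) = f U * charmatrix D * f V := by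
    show Matrix.scalar (Fin n) (X : ℝ[X]) - f (U * D * V) = f U * (Matrix.scalar (Fin n) (X : ℝ[X]) - f D) * f V
    rw [mul_sub, sub_mul, hcomm, _root_.map_mul, _root_.map_mul]
  rw [Matrix.charpoly, Matrix.charpoly, hmap, det_mul, det_mul]
  rw [mul_comm (det (f U)), mul_assoc, ← det_mul, hUV', det_one, mul_one]

lemma charpoly_diagonal (d : Fin n → ℝ) :
    (Matrix.diagonal d).charpoly = ∏ i, (X - C (d i)) := by
  have h : charmatrix (Matrix.diagonal d) = Matrix.diagonal (fun i => X - C (d i)) := by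
    show Matrix.scalar (Fin n) (X : ℝ[X]) - (RingHom.mapMatrix (C : ℝ →+* ℝ[X])) (Matrix.diagonal d) = _
    rw [Matrix.scalar_apply]
    ext i j
    by_cases hij : i = j <;> simp [hij, Matrix.diagonal_apply, RingHom.mapMatrix_apply, Matrix.map_apply]
  rw [Matrix.charpoly, h, det_diagonal]

end matrixpart

section main
open Matrix Polynomial

theorem schur_horn_easy' {n : ℕ} (X : Matrix (Fin n) (Fin n) ℝ) (hX : X.IsSymm)
    (lam : Fin n → ℝ)
    (hlam : X.charpoly = ∏ i, (Polynomial.X - Polynomial.C (lam i))) :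
    (∀ k, k ≤ n → largeSum (fun i => X i i) k ≤ largeSum lam k) ∧
      ∑ i, X i i = ∑ i, lam i := by
  classical
  have hH : X.IsHermitian := by
    rw [Matrix.IsHermitian]
    ext i j
    simpa [Matrix.conjTranspose_apply] using congrFun (congrFun hX i) j
  set U : Matrix (Fin n) (Fin n) ℝ := (hH.eigenvectorUnitary : Matrix (Fin n) (Fin n) ℝ) with hU
  set eig : Fin n → ℝ := hH.eigenvalues with heig
  have hspec : X = U * Matrix.diagonal eig * star U := by
    have := hH.spectral_theorem
    rwa [RCLike.ofReal_real_eq_id, Function.id_comp] at this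
  have hUV : U * star U = 1 := Matrix.mem_unitaryGroup_iff.mp hH.eigenvectorUnitary.2
  have hVU : star U * U = 1 := Matrix.mem_unitaryGroup_iff'.mp hH.eigenvectorUnitary.2
  -- charpoly
  have hcp : X.charpoly = ∏ i, (Polynomial.X - Polynomial.C (eig i)) := by
    rw [hspec, charpoly_conj_eq U _ (star U) hUV hVU, charpoly_diagonal]
  -- multiset equality
  have hms : (Finset.univ.val.map lam) = (Finset.univ.val.map eig) := by
    have h1 : ((Finset.univ.val.map lam).map (fun a => Polynomial.X - Polynomial.C a)).prod
        = ((Finset.univ.val.map eig).map (fun a => Polynomial.X - Polynomial.C a)).prod := by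
      rw [Multiset.map_map, Multiset.map_map]
      simpa [Finset.prod_eq_multiset_prod, Function.comp] using (hlam.symm.trans hcp)
    have := congrArg Polynomial.roots h1
    rwa [Polynomial.roots_multiset_prod_X_sub_C, Polynomial.roots_multiset_prod_X_sub_C] at this
  obtain ⟨σ, hσ⟩ : ∃ σ : Equiv.Perm (Fin n), lam = eig ∘ σ := by
    apply exists_perm_of_ofFn_perm
    apply Multiset.coe_eq_coe.mp
    rw [← Fin.univ_val_map, ← Fin.univ_val_map]
    exact hms
  have hdiag : ∀ i, X i i = ∑ j, U i j ^ 2 * eig j := by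
    intro i
    conv_lhs => rw [hspec]
    rw [Matrix.mul_apply]
    apply Finset.sum_congr rfl
    intro l _
    rw [Matrix.mul_diagonal, Matrix.star_apply, star_trivial]
    ring
  have hcol : ∀ j, ∑ i, U i j ^ 2 = 1 := by
    intro j
    have h := congrFun (congrFun hVU j) j
    rw [Matrix.mul_apply] at h
    simp only [Matrix.star_apply, star_trivial, Matrix.one_apply_eq] at h
    rw [← h]
    apply Finset.sum_congr rfl
    intro i _
    ring
  have hrow : ∀ i, ∑ j, U i j ^ 2 = 1 := by
    intro i
    have h := congrFun (congrFun hUV i) i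
    rw [Matrix.mul_apply] at h
    simp only [Matrix.star_apply, star_trivial, Matrix.one_apply_eq] at h
    rw [← h]
    apply Finset.sum_congr rfl
    intro j _
    ring
  have hLperm : largeSum lam = largeSum eig := by
    funext k
    rw [hσ, largeSum_perm]
  constructor
  · intro k hk
    obtain ⟨s, hs, hval⟩ := largeSum_mem (fun i => X i i) hk
    rw [hval, hLperm]
    set t : Fin n → ℝ := fun j => ∑ i ∈ s, U i j ^ 2 with ht
    have hcalc : ∑ i ∈ s, X i i = ∑ j, t j * eig j := by
      calc ∑ i ∈ s, X i i = ∑ i ∈ s, ∑ j, U i j ^ 2 * eig j :=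
            Finset.sum_congr rfl fun i _ => hdiag i
        _ = ∑ j, ∑ i ∈ s, U i j ^ 2 * eig j := Finset.sum_comm
        _ = ∑ j, t j * eig j := by
            apply Finset.sum_congr rfl
            intro j _
            rw [ht, Finset.sum_mul]
    rw [hcalc]
    apply sum_mul_le_largeSum eig t hk
    · intro j
      exact Finset.sum_nonneg fun i _ => sq_nonneg _
    · intro j
      calc t j ≤ ∑ i, U i j ^ 2 :=
            Finset.sum_le_sum_of_subset_of_nonneg (Finset.subset_univ s)
              (fun i _ _ => sq_nonneg _)
        _ = 1 := hcol j
    · calc ∑ j, t j = ∑ j, ∑ i ∈ s, U i j ^ 2 := rfl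
        _ = ∑ i ∈ s, ∑ j, U i j ^ 2 := Finset.sum_comm
        _ = ∑ i ∈ s, (1 : ℝ) := Finset.sum_congr rfl fun i _ => hrow i
        _ = k := by rw [Finset.sum_const, hs]; simp
  · calc ∑ i, X i i = ∑ i, ∑ j, U i j ^ 2 * eig j :=
          Finset.sum_congr rfl fun i _ => hdiag i
      _ = ∑ j, ∑ i, U i j ^ 2 * eig j := Finset.sum_comm
      _ = ∑ j, eig j := by
          apply Finset.sum_congr rfl
          intro j _
          rw [← Finset.sum_mul, hcol j, one_mul]
      _ = ∑ i, lam i := by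
          rw [hσ]
          exact (Equiv.sum_comp σ eig).symm
end main


/-- Schur-Horn, easy direction: the diagonal of a real symmetric matrix is majorized by
its vector of eigenvalues. -/
theorem schur_horn_easy {n : ℕ} (X : Matrix (Fin n) (Fin n) ℝ) (hX : X.IsSymm)
    (lam : Fin n → ℝ)
    (hlam : X.charpoly = ∏ i, (Polynomial.X - Polynomial.C (lam i))) :
    Majorized (fun i => X i i) lam := by
  exact schur_horn_easy' X hX lam hlam
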